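/- For a 2-level quantum system with Hamiltonian H (Hermitian, 2×2) with eigenvalues E₀ < E₁, if ψ is a unit vector and exp(-iTH)ψ is orthogonal to ψ for some T > 0, then T ≥ π/(E₁ - E₀), with equality achievable when ψ is an equal superposition of eigenstates. -/

import Mathlib

open Matrix

lemma unitary_dot (U : Matrix (Fin 2) (Fin 2) ℂ) (hU : U ∈ Matrix.unitaryGroup (Fin 2) ℂ)
    (x y : Fin 2 → ℂ) :
    dotProduct (star (U *ᵥ x)) (U *ᵥ y) = dotProduct (star x) y := by
  rw [star_mulVec, dotProduct_mulVec, vecMul_vecMul]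
  have : star U * U = 1 := (Matrix.mem_unitaryGroup_iff').mp hU
  rw [show Uᴴ = star U from rfl, this, vecMul_one]

lemma key (H : Matrix (Fin 2) (Fin 2) ℂ) (hH : H.IsHermitian) (c : ℂ) (ψ : Fin 2 → ℂ) :
    dotProduct (star ψ) ((NormedSpace.exp (c • H)).mulVec ψ) =
      ∑ i, (starRingEnd ℂ) (((star (hH.eigenvectorUnitary : Matrix (Fin 2) (Fin 2) ℂ)) *ᵥ ψ) i)
        * Complex.exp (c * hH.eigenvalues i)
        * (((star (hH.eigenvectorUnitary : Matrix (Fin 2) (Fin 2) ℂ)) *ᵥ ψ) i) := by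
  set U : Matrix (Fin 2) (Fin 2) ℂ := (hH.eigenvectorUnitary : Matrix (Fin 2) (Fin 2) ℂ) with hUdef
  have hU : U ∈ Matrix.unitaryGroup (Fin 2) ℂ := hH.eigenvectorUnitary.2
  have hUs : star U * U = 1 := (Matrix.mem_unitaryGroup_iff').mp hU
  have hUs' : U * star U = 1 := (Matrix.mem_unitaryGroup_iff).mp hU
  have hUinv : U⁻¹ = star U := Matrix.inv_eq_left_inv hUs
  have hUnit : IsUnit U := ⟨⟨U, star U, hUs', hUs⟩, rfl⟩
  set w : Fin 2 → ℂ := (star U) *ᵥ ψ with hw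
  have hψw : ψ = U *ᵥ w := by
    rw [hw, mulVec_mulVec, hUs', one_mulVec]
  have hdiag : c • H = U * (diagonal (fun i => c * (hH.eigenvalues i : ℂ))) * U⁻¹ := by
    rw [hUinv]
    have : (diagonal (fun i => c * (hH.eigenvalues i : ℂ)))
        = c • diagonal ((RCLike.ofReal : ℝ → ℂ) ∘ hH.eigenvalues) := by
      rw [← Matrix.diagonal_smul]; congr 1
    rw [this, mul_smul_comm, smul_mul_assoc]
    exact congrArg (c • ·) hH.spectral_theorem
  have hdd : NormedSpace.exp (diagonal (fun i => c * (hH.eigenvalues i : ℂ)))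
      = diagonal (fun i => Complex.exp (c * (hH.eigenvalues i : ℂ))) :=
    (Matrix.exp_diagonal _).trans (congrArg _ (funext fun i =>
      (Pi.coe_exp _ i).trans (congrFun Complex.exp_eq_exp_ℂ _).symm))
  have hexp : NormedSpace.exp (c • H)
      = U * (diagonal (fun i => Complex.exp (c * (hH.eigenvalues i : ℂ)))) * star U := by
    rw [hdiag]
    refine (Matrix.exp_conj U _ hUnit).trans ?_
    rw [hdd, hUinv]
  clear_value w
  rw [hexp]
  conv_lhs => rw [hψw]
  rw [mulVec_mulVec, Matrix.mul_assoc (U * _) (star U) U, hUs, Matrix.mul_one,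
    ← mulVec_mulVec, unitary_dot U hU]
  rw [show star w = fun i => (starRingEnd ℂ) (w i) from rfl]
  simp [dotProduct, mulVec_diagonal, mul_comm, mul_left_comm, mul_assoc]

/-- Quantum speed limit for a two-level system: if `H` is Hermitian with eigenvalues
`E₀ < E₁` and a unit state `ψ` is orthogonalized by `exp (-iTH)` at time `T > 0`, then
`T ≥ π / (E1 - E0)`; moreover equality is achievable by some unit state at
`T = π / (E1 - E0)`. -/
theorem two_level_orthogonalization_time
    (H : Matrix (Fin 2) (Fin 2) ℂ) (hH : H.IsHermitian)
    (E0 E1 : ℝ) (hlt : E0 < E1)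
    (hE0 : hH.eigenvalues 0 = E0) (hE1 : hH.eigenvalues 1 = E1)
    (ψ : Fin 2 → ℂ) (hψ : dotProduct (star ψ) ψ = 1)
    (T : ℝ) (hT : 0 < T)
    (horth : dotProduct (star ψ)
      ((NormedSpace.exp (((-(T : ℂ)) * Complex.I) • H)).mulVec ψ) = 0) :
    T ≥ Real.pi / (E1 - E0) ∧
      ∃ φ : Fin 2 → ℂ, dotProduct (star φ) φ = 1 ∧
        dotProduct (star φ)
          ((NormedSpace.exp
            (((-(Real.pi / (E1 - E0) : ℝ) : ℂ)) • (Complex.I • H))).mulVec φ) = 0 := by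
  have hgap : (0:ℝ) < E1 - E0 := sub_pos.2 hlt
  set U : Matrix (Fin 2) (Fin 2) ℂ := (hH.eigenvectorUnitary : Matrix (Fin 2) (Fin 2) ℂ) with hUdef
  have hU : U ∈ Matrix.unitaryGroup (Fin 2) ℂ := hH.eigenvectorUnitary.2
  have hUs : star U * U = 1 := (Matrix.mem_unitaryGroup_iff').mp hU
  set w : Fin 2 → ℂ := (star U) *ᵥ ψ with hw
  have hkey0 := key H hH 0 ψ
  simp only [zero_smul, NormedSpace.exp_zero, one_mulVec, hψ, zero_mul,
    Complex.exp_zero, mul_one] at hkey0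
  have h1 : (starRingEnd ℂ) (w 0) * (w 0) + (starRingEnd ℂ) (w 1) * (w 1) = 1 := by
    rw [← Fin.sum_univ_two (fun i => (starRingEnd ℂ) (w i) * (w i))]
    exact hkey0.symm
  set p : ℝ := Complex.normSq (w 0) with hp
  set q : ℝ := Complex.normSq (w 1) with hq
  have hcp : (starRingEnd ℂ) (w 0) * (w 0) = (p : ℂ) := by
    rw [mul_comm, Complex.mul_conj]
  have hcq : (starRingEnd ℂ) (w 1) * (w 1) = (q : ℂ) := by
    rw [mul_comm, Complex.mul_conj]
  have hpq : p + q = 1 := by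
    have : ((p + q : ℝ) : ℂ) = 1 := by push_cast; rw [← hcp, ← hcq]; exact h1
    exact_mod_cast this
  have hkeyT := key H hH (-(T:ℂ) * Complex.I) ψ
  rw [horth, Fin.sum_univ_two, hE0, hE1] at hkeyT
  rw [show ∀ a b : ℂ, (starRingEnd ℂ) (w 0) * a * w 0 + (starRingEnd ℂ) (w 1) * b * w 1
      = ((starRingEnd ℂ) (w 0) * w 0) * a + ((starRingEnd ℂ) (w 1) * w 1) * b
      from fun a b => by ring, hcp, hcq] at hkeyT
  have h2 : (p : ℂ) * Complex.exp (-(T:ℂ) * Complex.I * E0)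
      + (q : ℂ) * Complex.exp (-(T:ℂ) * Complex.I * E1) = 0 := hkeyT.symm
  have habs : ∀ x : ℝ, ‖Complex.exp (-(T:ℂ) * Complex.I * x)‖ = 1 := by
    intro x
    rw [Complex.norm_exp]
    simp [Complex.mul_re]
  have hpq' : p = q := by
    have h3 : (p : ℂ) * Complex.exp (-(T:ℂ) * Complex.I * E0)
        = -((q : ℂ) * Complex.exp (-(T:ℂ) * Complex.I * E1)) := by
      linear_combination h2
    have h3' := congrArg norm h3
    rwa [norm_mul, norm_neg, norm_mul, habs, habs, mul_one, mul_one,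
      Complex.norm_real, Complex.norm_real, Real.norm_eq_abs, Real.norm_eq_abs,
      abs_of_nonneg (Complex.normSq_nonneg _), abs_of_nonneg (Complex.normSq_nonneg _)] at h3'
  have hphalf : p = 1/2 := by linarith
  have hpc : (p : ℂ) = 1/2 := by rw [hphalf]; norm_num
  have hqc : (q : ℂ) = 1/2 := by rw [← hpq', hphalf]; norm_num
  rw [hpc, hqc] at h2
  have hexpne : Complex.exp (-(T:ℂ) * Complex.I * E0) ≠ 0 := Complex.exp_ne_zero _
  have h4 : Complex.exp (-(T:ℂ) * Complex.I * E1) = -Complex.exp (-(T:ℂ) * Complex.I * E0) := by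
    linear_combination 2 * h2
  have h5 : Complex.exp ((-(T * (E1 - E0)) : ℝ) * Complex.I) = -1 := by
    refine mul_right_cancel₀ hexpne ?_
    rw [← Complex.exp_add,
      show ((-(T * (E1 - E0)) : ℝ) : ℂ) * Complex.I + -(T:ℂ) * Complex.I * E0
        = -(T:ℂ) * Complex.I * E1 by push_cast; ring, h4]
    ring
  have h6 : Complex.exp ((-(T * (E1 - E0)) : ℝ) * Complex.I + Real.pi * Complex.I) = 1 := by
    rw [Complex.exp_add, h5, Complex.exp_pi_mul_I]; ring
  obtain ⟨n, hn⟩ := Complex.exp_eq_one_iff.mp h6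
  have him := congrArg Complex.im hn
  simp [Complex.mul_im, Complex.mul_re] at him
  have hreal : -(T * (E1 - E0)) + Real.pi = (n : ℝ) * (2 * Real.pi) := by
    linarith [him]
  have hπ := Real.pi_pos
  have hTg : 0 < T * (E1 - E0) := mul_pos hT hgap
  have hn0 : (n:ℝ) ≤ 0 := by
    by_contra hc
    push_neg at hc
    have h1n : (1:ℝ) ≤ (n:ℝ) := by
      exact_mod_cast (by exact_mod_cast hc : (0:ℤ) < n)
    nlinarith
  have hTgap : Real.pi ≤ T * (E1 - E0) := by nlinarith
  constructor
  · rw [ge_iff_le, div_le_iff₀ hgap]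
    linarith
  · set s : ℂ := (((Real.sqrt 2)⁻¹ : ℝ) : ℂ) with hs
    set v : Fin 2 → ℂ := ![s, s] with hv
    have hs2 : (starRingEnd ℂ) s * s = 1/2 := by
      rw [hs, Complex.conj_ofReal, ← Complex.ofReal_mul,
        show (Real.sqrt 2)⁻¹ * (Real.sqrt 2)⁻¹ = 1/2 by
          rw [← mul_inv, Real.mul_self_sqrt (by norm_num)]; norm_num]
      norm_num
    refine ⟨U *ᵥ v, ?_, ?_⟩
    · rw [unitary_dot U hU]
      simp only [dotProduct, Fin.sum_univ_two, Pi.star_apply, hv,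
        Matrix.cons_val_zero, Matrix.cons_val_one, Matrix.head_cons, RCLike.star_def]
      rw [hs2]; norm_num
    · rw [show ((-(Real.pi / (E1 - E0) : ℝ) : ℂ)) • (Complex.I • H)
        = ((-(Real.pi / (E1 - E0) : ℝ) : ℂ) * Complex.I) • H from smul_smul _ _ _]
      rw [key H hH _ (U *ᵥ v)]
      have hwv : (star U) *ᵥ (U *ᵥ v) = v := by
        rw [mulVec_mulVec, hUs, one_mulVec]
      rw [hwv, Fin.sum_univ_two, hE0, hE1]
      have h0 : ((E1:ℂ) - (E0:ℂ)) ≠ 0 := by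
        rw [sub_ne_zero]
        exact_mod_cast (ne_of_gt hlt)
      have hc' : (Real.pi:ℂ) / ((E1:ℂ) - E0) * ((E1:ℂ) - E0) = (Real.pi:ℂ) :=
        div_mul_cancel₀ _ h0
      have hdiff : (-(Real.pi / (E1 - E0) : ℝ) : ℂ) * Complex.I * E1
          = (-(Real.pi / (E1 - E0) : ℝ) : ℂ) * Complex.I * E0 + -(Real.pi * Complex.I) := by
        push_cast
        linear_combination (-Complex.I) * hc'
      rw [hdiff, Complex.exp_add, Complex.exp_neg, Complex.exp_pi_mul_I]
      simp only [hv, Matrix.cons_val_zero, Matrix.cons_val_one, Matrix.head_cons]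
      rw [show ((-1:ℂ))⁻¹ = -1 by norm_num]
      ring
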